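/- Let $G$ be a bipartite graph with parts $A$ and $B$, let $x \in B$, and fix constants $d < q$. Suppose that for every $y \in B \setminus \{x\}$ we have $|N(y) \cap N(x)| = o(|N(x)|)$. Then the number of $q$-element sets $Q \subseteq N(x)$ such that every $d$-subset $T \subseteq Q$ satisfies $|N(T)| < q$ and such that the sets $N(T) \setminus \{x\}$, over distinct $d$-subsets $T \subseteq Q$, are NOT pairwise disjoint, is $o(|N(x)|^q)$ as $|N(x)| \to \infty$. -/

import Mathlib

open Finset

/-- Neighborhood in `A` of a vertex `b` of the second part. -/
def nbrA {α β : Type} [DecidableEq α] (E : α → β → Prop) [∀ a b, Decidable (E a b)]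
    (A : Finset α) (b : β) : Finset α := A.filter (fun a => E a b)

/-- Neighborhood in `B` of a vertex `a` of the first part. -/
def nbrB {α β : Type} [DecidableEq β] (E : α → β → Prop) [∀ a b, Decidable (E a b)]
    (B : Finset β) (a : α) : Finset β := B.filter (fun b => E a b)

/-- Common neighborhood in `B` of a set `T` of vertices of the first part. -/
def commonNbr {α β : Type} [DecidableEq β] (E : α → β → Prop) [∀ a b, Decidable (E a b)]
    (B : Finset β) (T : Finset α) : Finset β := B.filter (fun b => ∀ a ∈ T, E a b)

/-- Number of edges of the bipartite graph with parts `A`, `B` and adjacency `E`. -/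
def edgeCount {α β : Type} (E : α → β → Prop) [∀ a b, Decidable (E a b)]
    (A : Finset α) (B : Finset β) : ℕ := ((A ×ˢ B).filter (fun p => E p.1 p.2)).card

/-- `K_{k,k}`-freeness of the bipartite graph with parts `A`, `B` and adjacency `E`. -/
def KFree {α β : Type} (E : α → β → Prop) (A : Finset α) (B : Finset β) (k : ℕ) : Prop :=
  ¬ ∃ S ⊆ A, ∃ T ⊆ B, S.card = k ∧ T.card = k ∧ ∀ a ∈ S, ∀ b ∈ T, E a b

/-- `Z ⊆ A` is shattered by the neighborhoods of the vertices of `B`. -/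
def Shatters {α β : Type} [DecidableEq α] (E : α → β → Prop) [∀ a b, Decidable (E a b)]
    (A : Finset α) (B : Finset β) (Z : Finset α) : Prop :=
  ∀ S ⊆ Z, ∃ b ∈ B, nbrA E A b ∩ Z = S

/-- The VC-dimension of the bipartite graph `(A,B,E)` with respect to `A` is at most `d`. -/
def VCdimLE {α β : Type} [DecidableEq α] (E : α → β → Prop) [∀ a b, Decidable (E a b)]
    (A : Finset α) (B : Finset β) (d : ℕ) : Prop :=
  ∀ Z ⊆ A, Shatters E A B Z → Z.card ≤ d

/-- Counting step: if every `y ≠ x` has `|N(y) ∩ N(x)| = o(|N(x)|)`, then the number of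
`q`-subsets `Q ⊆ N(x)` such that every `d`-subset `T ⊆ Q` has `|N(T)| < q` and the sets
`N(T) \ {x}` over distinct `d`-subsets are not pairwise disjoint is `o(|N(x)|^q)` as
`|N(x)| → ∞`. -/
theorem stmt_14 {α β : Type} [DecidableEq α] [DecidableEq β]
    (d q : ℕ) (hd : 1 ≤ d) (hdq : d < q)
    (E : ℕ → α → β → Prop) [∀ n a b, Decidable (E n a b)]
    (A : ℕ → Finset α) (B : ℕ → Finset β) (x : ℕ → β) (hx : ∀ n, x n ∈ B n)
    (hsmall : ∀ ε : ℝ, 0 < ε → ∃ n₀ : ℕ, ∀ n ≥ n₀, ∀ y ∈ B n, y ≠ x n →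
      ((nbrA (E n) (A n) y ∩ nbrA (E n) (A n) (x n)).card : ℝ)
        ≤ ε * ((nbrA (E n) (A n) (x n)).card : ℝ))
    (hinf : Filter.Tendsto (fun n => (nbrA (E n) (A n) (x n)).card)
      Filter.atTop Filter.atTop) :
    ∀ ε : ℝ, 0 < ε → ∃ n₀ : ℕ, ∀ n ≥ n₀,
      (((nbrA (E n) (A n) (x n)).powerset.filter (fun Q => Q.card = q ∧
          (∀ T ∈ Q.powerset, T.card = d → (commonNbr (E n) (B n) T).card < q) ∧
          ¬ (∀ T ∈ Q.powerset, ∀ T' ∈ Q.powerset, T.card = d → T'.card = d → T ≠ T' →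
            (commonNbr (E n) (B n) T).erase (x n) ∩
              (commonNbr (E n) (B n) T').erase (x n) = ∅))).card : ℝ)
        ≤ ε * ((nbrA (E n) (A n) (x n)).card : ℝ) ^ q := by
  intro ε hε
  have hq0 : 0 < q := lt_of_le_of_lt (Nat.zero_le d) hdq
  have hqR : (0:ℝ) < (q:ℝ) := by exact_mod_cast hq0
  obtain ⟨n₀, hn₀⟩ := hsmall (ε / q) (by positivity)
  refine ⟨n₀, fun n hn => ?_⟩
  set N := nbrA (E n) (A n) (x n) with hNdef
  set m := N.card with hmdef
  set bad := N.powerset.filter (fun Q => Q.card = q ∧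
          (∀ T ∈ Q.powerset, T.card = d → (commonNbr (E n) (B n) T).card < q) ∧
          ¬ (∀ T ∈ Q.powerset, ∀ T' ∈ Q.powerset, T.card = d → T'.card = d → T ≠ T' →
            (commonNbr (E n) (B n) T).erase (x n) ∩
              (commonNbr (E n) (B n) T').erase (x n) = ∅)) with hbad
  set r := q - d - 1 with hr
  have hqr : q = d + 1 + r := by omega
  set Ts := (N.powersetCard d).filter (fun T => (commonNbr (E n) (B n) T).card < q) with hTs
  set W := Ts.sigma (fun T => ((commonNbr (E n) (B n) T).erase (x n)).sigma
      (fun b => (nbrA (E n) (A n) b ∩ N).sigma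
      (fun _ => N.powersetCard r))) with hW
  -- surjection from W onto bad
  have hcard : bad.card ≤ W.card := by
    apply Finset.card_le_card_of_surjOn
      (fun w : (_ : Finset α) × (_ : β) × (_ : α) × Finset α => insert w.2.2.1 w.1 ∪ w.2.2.2)
    intro Q hQ
    simp only [Finset.coe_filter, Set.mem_setOf_eq, Finset.mem_powerset, hbad,
      Finset.mem_filter] at hQ
    obtain ⟨hQN, hQq, hlt, hnd⟩ := hQ
    push_neg at hnd
    obtain ⟨T, hT, T', hT', hTd, hT'd, hTne, hint⟩ := hnd
    obtain ⟨b, hb⟩ := hint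
    rw [Finset.mem_inter, Finset.mem_erase, Finset.mem_erase] at hb
    obtain ⟨⟨hbx, hbT⟩, _, hbT'⟩ := hb
    have hsd : (T' \ T).Nonempty := by
      rw [Finset.sdiff_nonempty]
      intro hsub
      exact hTne (Finset.eq_of_subset_of_card_le hsub (by omega)).symm
    obtain ⟨a, ha⟩ := hsd
    rw [Finset.mem_sdiff] at ha
    have haQ : a ∈ Q := hT' ha.1
    have hiaT : insert a T ⊆ Q := Finset.insert_subset haQ hT
    refine ⟨⟨T, b, a, Q \ insert a T⟩, ?_, ?_⟩
    · rw [Finset.mem_coe, hW, Finset.mem_sigma, Finset.mem_sigma, Finset.mem_sigma]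
      refine ⟨?_, ?_, ?_, ?_⟩
      · rw [hTs, Finset.mem_filter, Finset.mem_powersetCard]
        exact ⟨⟨hT.trans hQN, hTd⟩, hlt T hT hTd⟩
      · exact Finset.mem_erase.mpr ⟨hbx, hbT⟩
      · have hbE : E n a b := by
          rw [commonNbr, Finset.mem_filter] at hbT'
          exact hbT'.2 a ha.1
        have haN : a ∈ N := hQN haQ
        have haA : a ∈ A n := Finset.mem_of_mem_filter a haN
        exact Finset.mem_inter.mpr ⟨Finset.mem_filter.mpr ⟨haA, hbE⟩, haN⟩
      · rw [Finset.mem_powersetCard]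
        constructor
        · exact (Finset.sdiff_subset).trans hQN
        · rw [Finset.card_sdiff_of_subset hiaT, Finset.card_insert_of_notMem ha.2, hQq, hTd]
          omega
    · exact Finset.union_sdiff_of_subset hiaT
  -- now bound W.card
  have hWcard : W.card = ∑ T ∈ Ts, ∑ b ∈ (commonNbr (E n) (B n) T).erase (x n),
      ∑ _a ∈ (nbrA (E n) (A n) b ∩ N), (N.powersetCard r).card := by
    rw [hW, Finset.card_sigma]
    refine Finset.sum_congr rfl (fun T _ => ?_)
    rw [Finset.card_sigma]
    refine Finset.sum_congr rfl (fun b _ => ?_)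
    rw [Finset.card_sigma]
  have hpowcard : ((N.powersetCard r).card : ℝ) ≤ (m:ℝ) ^ r := by
    rw [Finset.card_powersetCard]
    exact_mod_cast Nat.choose_le_pow m r
  have hmr : (0:ℝ) ≤ (m:ℝ)^r := pow_nonneg (Nat.cast_nonneg _) _
  have step2 : ∀ T, ∀ b ∈ (commonNbr (E n) (B n) T).erase (x n),
      (∑ _a ∈ (nbrA (E n) (A n) b ∩ N), ((N.powersetCard r).card : ℝ))
      ≤ (ε/q * m) * (m:ℝ)^r := by
    intro T b hbmem
    rw [Finset.mem_erase] at hbmem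
    have hbB : b ∈ B n := Finset.mem_of_mem_filter b hbmem.2
    have hsm := hn₀ n hn b hbB hbmem.1
    rw [Finset.sum_const, nsmul_eq_mul]
    exact mul_le_mul hsm hpowcard (Nat.cast_nonneg _) (mul_nonneg (div_nonneg hε.le hqR.le) (Nat.cast_nonneg _))
  have step1 : ∀ T ∈ Ts, (∑ b ∈ (commonNbr (E n) (B n) T).erase (x n),
      ∑ _a ∈ (nbrA (E n) (A n) b ∩ N), ((N.powersetCard r).card : ℝ))
      ≤ (q:ℝ) * ((ε/q * m) * (m:ℝ)^r) := by
    intro T hTmem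
    have hCT : ((commonNbr (E n) (B n) T).erase (x n)).card ≤ q := by
      rw [hTs, Finset.mem_filter] at hTmem
      exact le_trans Finset.card_erase_le (le_of_lt hTmem.2)
    have h1 := Finset.sum_le_card_nsmul ((commonNbr (E n) (B n) T).erase (x n))
      _ ((ε/q * m) * (m:ℝ)^r) (step2 T)
    rw [nsmul_eq_mul] at h1
    refine h1.trans (mul_le_mul_of_nonneg_right ?_ (mul_nonneg (mul_nonneg (div_nonneg hε.le hqR.le) (Nat.cast_nonneg _)) hmr))
    exact_mod_cast hCT
  have hbound : (W.card : ℝ) ≤ (m:ℝ)^d * ((q:ℝ) * ((ε/q * m) * (m:ℝ)^r)) := by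
    rw [hWcard]
    push_cast
    have h2 := Finset.sum_le_card_nsmul Ts _ ((q:ℝ) * ((ε/q * m) * (m:ℝ)^r)) step1
    rw [nsmul_eq_mul] at h2
    refine h2.trans (mul_le_mul_of_nonneg_right ?_ (mul_nonneg hqR.le (mul_nonneg (mul_nonneg (div_nonneg hε.le hqR.le) (Nat.cast_nonneg _)) hmr)))
    have hTc : Ts.card ≤ m ^ d := by
      calc Ts.card ≤ (N.powersetCard d).card := Finset.card_le_card (Finset.filter_subset _ _)
        _ = m.choose d := Finset.card_powersetCard d N
        _ ≤ m ^ d := Nat.choose_le_pow m d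
    exact_mod_cast hTc
  have hfin : (m:ℝ)^d * ((q:ℝ) * ((ε/q * m) * (m:ℝ)^r)) = ε * (m:ℝ)^q := by
    rw [hqr]
    field_simp
    ring
  have hbadW : (bad.card : ℝ) ≤ (W.card : ℝ) := by exact_mod_cast hcard
  rw [← hfin]
  exact hbadW.trans hbound
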